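/- Let P be a convex subset of ℝ^m, let f, g : P → ℝ be continuously differentiable with g ≥ 0 pointwise, and let q ∈ (0,1), v > 0. Then the Lipschitz seminorm of the function x ↦ f(x)/((1−q)·g(x) + q/v) satisfies ‖f/((1−q)g + q/v)‖_Lip ≤ ((1−q)·v²/q²) · ( ‖∇f‖_∞ · ‖g − f‖_∞ + ‖f‖_∞ · ‖∇f − ∇g‖_∞ ) + (v/q)·‖∇f‖_∞. -/

import Mathlib

/-- Lipschitz-seminorm bound for the regularized quotient.
For `f, g` continuously differentiable on a convex `P ⊆ ℝ^m` with `g ≥ 0`,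
`q ∈ (0,1)` and `v > 0`,
`‖f/((1−q)g + q/v)‖_Lip ≤ ((1−q)v²/q²)(‖∇f‖_∞ ‖g−f‖_∞ + ‖f‖_∞ ‖∇f−∇g‖_∞) + (v/q)‖∇f‖_∞`. -/
theorem stmt_9 {m : ℕ} (P : Set (EuclideanSpace ℝ (Fin m))) (hPconv : Convex ℝ P)
    (f g : EuclideanSpace ℝ (Fin m) → ℝ)
    (hf : ContDiffOn ℝ 1 f P) (hg : ContDiffOn ℝ 1 g P)
    (hgnonneg : ∀ x ∈ P, 0 ≤ g x)
    (q : ℝ) (hq0 : 0 < q) (hq1 : q < 1)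
    (v : ℝ) (hv : 0 < v)
    (Cdf : ℝ) (hCdf : ∀ x ∈ P, ‖fderivWithin ℝ f P x‖ ≤ Cdf)
    (Cf : ℝ) (hCf : ∀ x ∈ P, |f x| ≤ Cf)
    (Cgf : ℝ) (hCgf : ∀ x ∈ P, |g x - f x| ≤ Cgf)
    (Cdfg : ℝ) (hCdfg : ∀ x ∈ P, ‖fderivWithin ℝ f P x - fderivWithin ℝ g P x‖ ≤ Cdfg) :
    LipschitzOnWith
      (Real.toNNReal
        (((1 - q) * v ^ 2 / q ^ 2) * (Cdf * Cgf + Cf * Cdfg) + (v / q) * Cdf))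
      (fun x => f x / ((1 - q) * g x + q / v)) P := by
  rcases P.eq_empty_or_nonempty with hP | ⟨x₀, hx₀⟩
  · rw [hP]; exact lipschitzOnWith_empty _ _
  have hq' : (0:ℝ) < 1 - q := by linarith
  have hCdf0 : 0 ≤ Cdf := le_trans (norm_nonneg _) (hCdf x₀ hx₀)
  have hCf0 : 0 ≤ Cf := le_trans (abs_nonneg _) (hCf x₀ hx₀)
  have hCgf0 : 0 ≤ Cgf := le_trans (abs_nonneg _) (hCgf x₀ hx₀)
  have hCdfg0 : 0 ≤ Cdfg := le_trans (norm_nonneg _) (hCdfg x₀ hx₀)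
  set K : ℝ := ((1 - q) * v ^ 2 / q ^ 2) * (Cdf * Cgf + Cf * Cdfg) + (v / q) * Cdf with hKdef
  have hK0 : 0 ≤ K := by positivity
  set D : EuclideanSpace ℝ (Fin m) → ℝ := fun x => (1 - q) * g x + q / v with hDdef
  have hDpos : ∀ x ∈ P, q / v ≤ D x := by
    intro x hx
    have := hgnonneg x hx
    simp only [hDdef]
    nlinarith
  have hqv : (0:ℝ) < q / v := by positivity
  have hKeq : (v / q) ^ 2 * ((1 - q) * Cgf * Cdf + (1 - q) * Cf * Cdfg + (q / v) * Cdf)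
      = K := by
    rw [hKdef]
    field_simp
  have hkey : ∀ (d a b : ℝ), d = (1 - q) * a + q / v → d ≠ 0 →
      ∀ (u w : EuclideanSpace ℝ (Fin m) →L[ℝ] ℝ),
      d⁻¹ • u - (b * (d ^ 2)⁻¹ * (1 - q)) • w
        = (d ^ 2)⁻¹ • (((1 - q) * (a - b)) • u + ((1 - q) * b) • (u - w) + (q / v) • u) := by
    intro d a b hd hdne u w
    have hqv' : q / v = d - (1 - q) * a := by rw [hd]; ring
    ext e
    simp only [ContinuousLinearMap.smul_apply, ContinuousLinearMap.sub_apply,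
      ContinuousLinearMap.add_apply, smul_eq_mul]
    rw [hqv']
    field_simp
    ring
  set F' : EuclideanSpace ℝ (Fin m) →
      (EuclideanSpace ℝ (Fin m) →L[ℝ] ℝ) := fun x =>
    (D x)⁻¹ • fderivWithin ℝ f P x
      - (f x * ((D x) ^ 2)⁻¹ * (1 - q)) • fderivWithin ℝ g P x with hF'def
  apply Convex.lipschitzOnWith_of_nnnorm_hasFDerivWithin_le (f' := F')
  · intro x hx
    have hDx : D x ≠ 0 := ne_of_gt (lt_of_lt_of_le hqv (hDpos x hx))
    have hfd : HasFDerivWithinAt f (fderivWithin ℝ f P x) P x :=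
      ((hf.differentiableOn one_ne_zero) x hx).hasFDerivWithinAt
    have hgd : HasFDerivWithinAt g (fderivWithin ℝ g P x) P x :=
      ((hg.differentiableOn one_ne_zero) x hx).hasFDerivWithinAt
    have hDd : HasFDerivWithinAt D ((1 - q) • fderivWithin ℝ g P x) P x := by
      simpa [hDdef] using (hgd.const_mul (1 - q)).add_const (q / v)
    have hinv : HasFDerivWithinAt (fun y => (D y)⁻¹)
        ((ContinuousLinearMap.smulRight (1 : ℝ →L[ℝ] ℝ) (-((D x) ^ 2)⁻¹)).comp
          ((1 - q) • fderivWithin ℝ g P x)) P x :=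
      (hasFDerivAt_inv hDx).comp_hasFDerivWithinAt x hDd
    have hmul := hfd.mul hinv
    have heq : (f x • ((ContinuousLinearMap.smulRight (1 : ℝ →L[ℝ] ℝ) (-((D x) ^ 2)⁻¹)).comp
          ((1 - q) • fderivWithin ℝ g P x)) + (D x)⁻¹ • fderivWithin ℝ f P x) = F' x := by
      simp only [hF'def]
      ext e
      simp [ContinuousLinearMap.smul_apply, ContinuousLinearMap.comp_apply,
        ContinuousLinearMap.sub_apply]
      ring
    rw [heq] at hmul
    have hfun : (fun y => f y / D y) = (fun y => f y * (D y)⁻¹) := by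
      funext y; rw [div_eq_mul_inv]
    have h2 : HasFDerivWithinAt (fun y => f y / D y) (F' x) P x := by
      rw [hfun]; exact hmul
    exact h2
  · intro x hx
    have hDx : (0:ℝ) < D x := lt_of_lt_of_le hqv (hDpos x hx)
    rw [← NNReal.coe_le_coe, coe_nnnorm, Real.coe_toNNReal _ hK0]
    have hdval : D x = (1 - q) * g x + q / v := by simp only [hDdef]
    have hrw : F' x = ((D x) ^ 2)⁻¹ •
        ( ((1 - q) * (g x - f x)) • fderivWithin ℝ f P x
          + ((1 - q) * f x) • (fderivWithin ℝ f P x - fderivWithin ℝ g P x)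
          + (q / v) • fderivWithin ℝ f P x ) := by
      simp only [hF'def]
      exact hkey (D x) (g x) (f x) hdval (ne_of_gt hDx) _ _
    have hb1 : ‖((1 - q) * (g x - f x)) • fderivWithin ℝ f P x‖ ≤ (1 - q) * Cgf * Cdf := by
      rw [norm_smul]
      have h1 : ‖(1 - q) * (g x - f x)‖ ≤ (1 - q) * Cgf := by
        rw [Real.norm_eq_abs, abs_mul, abs_of_pos hq']
        exact mul_le_mul_of_nonneg_left (hCgf x hx) (le_of_lt hq')
      exact mul_le_mul h1 (hCdf x hx) (norm_nonneg _) (by positivity)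
    have hb2 : ‖((1 - q) * f x) • (fderivWithin ℝ f P x - fderivWithin ℝ g P x)‖
        ≤ (1 - q) * Cf * Cdfg := by
      rw [norm_smul]
      have h1 : ‖(1 - q) * f x‖ ≤ (1 - q) * Cf := by
        rw [Real.norm_eq_abs, abs_mul, abs_of_pos hq']
        exact mul_le_mul_of_nonneg_left (hCf x hx) (le_of_lt hq')
      exact mul_le_mul h1 (hCdfg x hx) (norm_nonneg _) (by positivity)
    have hb3 : ‖(q / v) • fderivWithin ℝ f P x‖ ≤ (q / v) * Cdf := by
      rw [norm_smul, Real.norm_eq_abs, abs_of_pos hqv]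
      exact mul_le_mul_of_nonneg_left (hCdf x hx) (le_of_lt hqv)
    have hsum : ‖((1 - q) * (g x - f x)) • fderivWithin ℝ f P x
          + ((1 - q) * f x) • (fderivWithin ℝ f P x - fderivWithin ℝ g P x)
          + (q / v) • fderivWithin ℝ f P x‖
        ≤ (1 - q) * Cgf * Cdf + (1 - q) * Cf * Cdfg + (q / v) * Cdf := by
      refine le_trans (norm_add_le _ _) ?_
      exact add_le_add (le_trans (norm_add_le _ _) (add_le_add hb1 hb2)) hb3
    have hDinv : ((D x) ^ 2)⁻¹ ≤ (v / q) ^ 2 := by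
      have h1 : (q / v) ^ 2 ≤ (D x) ^ 2 := pow_le_pow_left₀ (le_of_lt hqv) (hDpos x hx) 2
      have h2 : (0:ℝ) < (q / v) ^ 2 := by positivity
      calc ((D x) ^ 2)⁻¹ ≤ ((q / v) ^ 2)⁻¹ := inv_anti₀ h2 h1
        _ = (v / q) ^ 2 := by rw [← inv_pow, inv_div]
    rw [hrw, norm_smul, Real.norm_eq_abs,
      abs_of_pos (by positivity : (0:ℝ) < ((D x) ^ 2)⁻¹)]
    exact le_trans (mul_le_mul hDinv hsum (norm_nonneg _) (by positivity)) (le_of_eq hKeq)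
  · exact hPconv
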